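/- Let G be a group and let V = {1, i₁, i₂, i₃} be a Klein four-subgroup of G, so i₁, i₂, i₃ are pairwise commuting involutions with i₁·i₂ = i₃. Let g ∈ G and set j₂ = i₂^g. Assume that t₁ = i₁·j₂ has odd order m₁, and set u₁ = t₁^{(m₁+1)/2} and k = i₃^{g·u₁^{-1}}. Assume further that t₂ = i₂·k has odd order m₂, and set u₂ = t₂^{(m₂+1)/2} and x = g·u₁^{-1}·u₂^{-1}. Then i₃^x = i₂, i₂^x = i₁ and i₁^x = i₃; in particular, x lies in the normalizer N_G(V) and induces on V an automorphism of order 3 cyclically permuting i₁, i₂, i₃. -/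

import Mathlib

private lemma key_conj (G : Type*) [Group G] (i j : G) (hi : i * i = 1) (hj : j * j = 1)
    (m : ℕ) (hm : orderOf (i * j) = m) (hodd : Odd m)
    (u : G) (hu : u = (i * j) ^ ((m + 1) / 2)) : u * j * u⁻¹ = i := by
  obtain ⟨t, ht⟩ : ∃ t, i * j = t := ⟨_, rfl⟩
  rw [ht] at hm hu
  have hi' : i⁻¹ = i := inv_eq_of_mul_eq_one_right hi
  have hj' : j⁻¹ = j := inv_eq_of_mul_eq_one_right hj
  have hti : i * t * i = t⁻¹ := by
    rw [← ht, mul_inv_rev, hi', hj']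
    calc i * (i * j) * i = (i * i) * (j * i) := by group
      _ = j * i := by rw [hi, one_mul]
  have hpow : ∀ n : ℕ, i * t ^ n * i = (t ^ n)⁻¹ := by
    intro n
    induction n with
    | zero => simp [hi]
    | succ n ih =>
      calc i * t ^ (n + 1) * i = (i * t ^ n * i) * (i * t * i) := by
            rw [pow_succ]
            calc i * (t ^ n * t) * i = i * t ^ n * (i * i) * t * i := by rw [hi]; group
              _ = (i * t ^ n * i) * (i * t * i) := by group
        _ = (t ^ n)⁻¹ * t⁻¹ := by rw [ih, hti]
        _ = (t ^ (n + 1))⁻¹ := by group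
  have hiu : i * u * i = u⁻¹ := by rw [hu]; exact hpow _
  have hu2 : u * u = t := by
    obtain ⟨c, hc⟩ := hodd
    have hdiv : (m + 1) / 2 + (m + 1) / 2 = m + 1 := by omega
    rw [hu, ← pow_add, hdiv, pow_succ, ← hm, pow_orderOf_eq_one, one_mul]
  have hui : u * i = i * u⁻¹ := by
    have h : i * u⁻¹ * i = u := by
      calc i * u⁻¹ * i = i⁻¹ * u⁻¹ * i⁻¹ := by rw [hi']
        _ = (i * u * i)⁻¹ := by group
        _ = u := by rw [hiu, inv_inv]
    calc u * i = (i * u⁻¹ * i) * i := by rw [h]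
      _ = i * u⁻¹ * (i * i) := by group
      _ = i * u⁻¹ := by rw [hi, mul_one]
  have hjt : j = i * t := by rw [← ht, ← mul_assoc, hi, one_mul]
  calc u * j * u⁻¹ = (u * i) * t * u⁻¹ := by rw [hjt]; group
    _ = i * (u⁻¹ * (u * u) * u⁻¹) := by rw [hui, hu2]; group
    _ = i := by group

/-- Let `V = {1, i₁, i₂, i₃}` be a Klein four-subgroup of a group `G`,
so `i₁, i₂, i₃` are pairwise distinct commuting involutions with `i₁·i₂ = i₃`.  Let
`g ∈ G`, set `j₂ = i₂^g`, assume `t₁ = i₁·j₂` has odd order `m₁`, set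
`u₁ = t₁^{(m₁+1)/2}` and `k = i₃^{g·u₁⁻¹}`, assume `t₂ = i₂·k` has odd order `m₂`, and
set `u₂ = t₂^{(m₂+1)/2}` and `x = g·u₁⁻¹·u₂⁻¹`.  Then `i₃^x = i₂`, `i₂^x = i₁`,
`i₁^x = i₃`; in particular `x ∈ N_G(V)` cyclically permutes `i₁, i₂, i₃`. -/
theorem element_of_order_three_permuting_involutions (G : Type*) [Group G]
    (V : Subgroup G) (i₁ i₂ i₃ : G) (hV : (V : Set G) = {1, i₁, i₂, i₃})
    (h₁ : orderOf i₁ = 2) (h₂ : orderOf i₂ = 2) (h₃ : orderOf i₃ = 2)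
    (h12 : i₁ ≠ i₂) (h13 : i₁ ≠ i₃) (h23 : i₂ ≠ i₃)
    (hcomm : i₁ * i₂ = i₂ * i₁) (hprod : i₁ * i₂ = i₃)
    (g : G) (m₁ : ℕ) (hm₁ : orderOf (i₁ * (g⁻¹ * i₂ * g)) = m₁) (hodd₁ : Odd m₁)
    (u₁ : G) (hu₁ : u₁ = (i₁ * (g⁻¹ * i₂ * g)) ^ ((m₁ + 1) / 2))
    (k : G) (hk : k = (g * u₁⁻¹)⁻¹ * i₃ * (g * u₁⁻¹))
    (m₂ : ℕ) (hm₂ : orderOf (i₂ * k) = m₂) (hodd₂ : Odd m₂)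
    (u₂ : G) (hu₂ : u₂ = (i₂ * k) ^ ((m₂ + 1) / 2))
    (x : G) (hx : x = g * u₁⁻¹ * u₂⁻¹) :
    x⁻¹ * i₃ * x = i₂ ∧ x⁻¹ * i₂ * x = i₁ ∧ x⁻¹ * i₁ * x = i₃ ∧
      x ∈ Subgroup.normalizer (V : Set G) := by
  have sq1 : i₁ * i₁ = 1 := by
    have := pow_orderOf_eq_one i₁; rwa [h₁, pow_two] at this
  have sq2 : i₂ * i₂ = 1 := by
    have := pow_orderOf_eq_one i₂; rwa [h₂, pow_two] at this
  have sq3 : i₃ * i₃ = 1 := by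
    have := pow_orderOf_eq_one i₃; rwa [h₃, pow_two] at this
  set j₂ := g⁻¹ * i₂ * g with hj₂
  have sqj : j₂ * j₂ = 1 := by
    rw [hj₂]
    calc g⁻¹ * i₂ * g * (g⁻¹ * i₂ * g) = g⁻¹ * i₂ * (g * g⁻¹) * i₂ * g := by group
      _ = g⁻¹ * (i₂ * i₂) * g := by group
      _ = 1 := by rw [sq2]; group
  have key1 : u₁ * j₂ * u₁⁻¹ = i₁ := key_conj G i₁ j₂ sq1 sqj m₁ hm₁ hodd₁ u₁ hu₁
  set y := g * u₁⁻¹ with hy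
  have hy1 : y⁻¹ * i₂ * y = i₁ := by
    rw [hy, ← key1, hj₂]; group
  have sqk : k * k = 1 := by
    rw [hk]
    calc (g * u₁⁻¹)⁻¹ * i₃ * (g * u₁⁻¹) * ((g * u₁⁻¹)⁻¹ * i₃ * (g * u₁⁻¹))
        = (g * u₁⁻¹)⁻¹ * (i₃ * i₃) * (g * u₁⁻¹) := by group
      _ = 1 := by rw [sq3]; group
  have key2 : u₂ * k * u₂⁻¹ = i₂ := key_conj G i₂ k sq2 sqk m₂ hm₂ hodd₂ u₂ hu₂
  have hxy : x = y * u₂⁻¹ := by rw [hx, hy]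
  -- commutation facts
  have h23a : i₂ * i₃ = i₁ := by
    rw [← hprod, ← mul_assoc, ← hcomm, mul_assoc, sq2, mul_one]
  have h23b : i₃ * i₂ = i₁ := by rw [← hprod, mul_assoc, sq2, mul_one]
  have hky : k = y⁻¹ * i₃ * y := by rw [hk, hy]
  have c1k : i₁ * k = k * i₁ := by
    rw [← hy1, hky]
    calc y⁻¹ * i₂ * y * (y⁻¹ * i₃ * y) = y⁻¹ * (i₂ * i₃) * y := by group
      _ = y⁻¹ * (i₃ * i₂) * y := by rw [h23a, h23b]
      _ = y⁻¹ * i₃ * y * (y⁻¹ * i₂ * y) := by group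
  have c1u : Commute i₁ u₂ := by
    rw [hu₂]
    have a1 : Commute i₁ i₂ := hcomm
    have a2 : Commute i₁ k := c1k
    exact (a1.mul_right a2).pow_right _
  have e3 : x⁻¹ * i₃ * x = i₂ := by
    rw [hxy, ← key2, hky]; group
  have e2 : x⁻¹ * i₂ * x = i₁ := by
    calc x⁻¹ * i₂ * x = u₂ * (y⁻¹ * i₂ * y) * u₂⁻¹ := by rw [hxy]; group
      _ = u₂ * i₁ * u₂⁻¹ := by rw [hy1]
      _ = i₁ * u₂ * u₂⁻¹ := by rw [← c1u.eq]
      _ = i₁ := by group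
  have e1 : x⁻¹ * i₁ * x = i₃ := by
    calc x⁻¹ * i₁ * x = x⁻¹ * (i₂ * i₃) * x := by rw [h23a]
      _ = (x⁻¹ * i₂ * x) * (x⁻¹ * i₃ * x) := by group
      _ = i₁ * i₂ := by rw [e2, e3]
      _ = i₃ := hprod
  refine ⟨e3, e2, e1, ?_⟩
  have f1 : x * i₂ * x⁻¹ = i₃ := by rw [← e3]; group
  have f2 : x * i₁ * x⁻¹ = i₂ := by rw [← e2]; group
  have f3 : x * i₃ * x⁻¹ = i₁ := by rw [← e1]; group
  rw [Subgroup.mem_normalizer_iff]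
  intro n
  have hmem : ∀ a : G, a ∈ V ↔ a = 1 ∨ a = i₁ ∨ a = i₂ ∨ a = i₃ := by
    intro a
    rw [← SetLike.mem_coe, hV]
    simp [Set.mem_insert_iff]
  rw [hmem n, hmem (x * n * x⁻¹)]
  constructor
  · rintro (rfl | rfl | rfl | rfl)
    · left; group
    · right; right; left; exact f2
    · right; right; right; exact f1
    · right; left; exact f3
  · rintro (h | h | h | h)
    · left
      have : n = x⁻¹ * 1 * x := by rw [← h]; group
      rw [this]; group
    · right; right; right
      have : n = x⁻¹ * i₁ * x := by rw [← h]; group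
      rw [this, e1]
    · right; left
      have : n = x⁻¹ * i₂ * x := by rw [← h]; group
      rw [this, e2]
    · right; right; left
      have : n = x⁻¹ * i₃ * x := by rw [← h]; group
      rw [this, e3]
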